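/- Let F = (C₁, …, C_s) be a flag of Delsarte codes in the space of m×n matrices over 𝔽_q, and let ρ_F be the rank function associated to F, that is, ρ_F(X) = Σ_{i=1}^{s} (−1)^{i+1} ρ_{C_i}(X) for X ∈ Σ(E). Then P(F) = (E, ρ_F) is a (q,m)-demi-polymatroid. -/

import Mathlib

set_option linter.unusedSectionVars false

open Module Matrix

variable {F : Type*} [Field F] [Fintype F] {n : ℕ}

/-- The orthogonal complement of a subspace of `𝔽_q^n` with respect to the standard dot product. -/
def perp (X : Submodule F (Fin n → F)) : Submodule F (Fin n → F) where
  carrier := {x | ∀ y ∈ X, dotProduct x y = 0}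
  add_mem' := fun {a b} ha hb y hy => by
    rw [Set.mem_setOf_eq] at *
    rw [add_dotProduct, ha y hy, hb y hy, add_zero]
  zero_mem' := fun y hy => zero_dotProduct y
  smul_mem' := fun c a ha y hy => by
    rw [Set.mem_setOf_eq] at *
    rw [smul_dotProduct, ha y hy, smul_zero]

/-- The dual rank function `ρ*(X) = ρ(X^⊥) + m·dim X − ρ(E)`. -/
noncomputable def dualRho (m : ℕ) (rho : Submodule F (Fin n → F) → ℤ) (X : Submodule F (Fin n → F)) : ℤ :=
  rho (perp X) + (m : ℤ) * (finrank F X : ℤ) - rho ⊤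

/-- The nullity function `ν(X) = m·dim X − ρ(X)`. -/
noncomputable def nullity (m : ℕ) (rho : Submodule F (Fin n → F) → ℤ) (X : Submodule F (Fin n → F)) : ℤ :=
  (m : ℤ) * (finrank F X : ℤ) - rho X

/-- The conullity function `ν*(X) = ρ(E) − ρ(X^⊥)`. -/
def coNull (rho : Submodule F (Fin n → F) → ℤ) (X : Submodule F (Fin n → F)) : ℤ :=
  rho ⊤ - rho (perp X)

/-- The `r`-th generalized weight `d_r = min{dim X : ν*(X) ≥ r}`. -/
noncomputable def genW (rho : Submodule F (Fin n → F) → ℤ) (r : ℤ) : ℕ :=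
  sInf {d : ℕ | ∃ X : Submodule F (Fin n → F), finrank F X = d ∧ r ≤ coNull rho X}

/-- `h(x) = max{ν(X) : dim X = x}`. -/
noncomputable def hFun (m : ℕ) (rho : Submodule F (Fin n → F) → ℤ) (x : ℕ) : ℤ :=
  sSup {v : ℤ | ∃ X : Submodule F (Fin n → F), finrank F X = x ∧ v = nullity m rho X}

/-- `h*(x) = max{ν*(X) : dim X = x}`. -/
noncomputable def hStar (rho : Submodule F (Fin n → F) → ℤ) (x : ℕ) : ℤ :=
  sSup {v : ℤ | ∃ X : Submodule F (Fin n → F), finrank F X = x ∧ v = coNull rho X}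

/-- A `(q,m)`-polymatroid on `E = 𝔽_q^n`. -/
structure QMPolymatroid (F : Type*) [Field F] [Fintype F] (n m : ℕ) where
  rho : Submodule F (Fin n → F) → ℤ
  rho_nonneg : ∀ X, 0 ≤ rho X
  rho_le : ∀ X, rho X ≤ (m : ℤ) * (finrank F X : ℤ)
  rho_mono : ∀ ⦃X Y⦄, X ≤ Y → rho X ≤ rho Y
  rho_submodular : ∀ X Y, rho (X ⊔ Y) + rho (X ⊓ Y) ≤ rho X + rho Y

/-- A `(q,m)`-demi-polymatroid on `E = 𝔽_q^n`. -/
structure QMDemiPolymatroid (F : Type*) [Field F] [Fintype F] (n m : ℕ) where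
  rho : Submodule F (Fin n → F) → ℤ
  rho_nonneg : ∀ X, 0 ≤ rho X
  rho_le : ∀ X, rho X ≤ (m : ℤ) * (finrank F X : ℤ)
  rho_mono : ∀ ⦃X Y⦄, X ≤ Y → rho X ≤ rho Y
  dual_nonneg : ∀ X, 0 ≤ dualRho m rho X
  dual_le : ∀ X, dualRho m rho X ≤ (m : ℤ) * (finrank F X : ℤ)
  dual_mono : ∀ ⦃X Y⦄, X ≤ Y → dualRho m rho X ≤ dualRho m rho Y

section Codes

variable {m : ℕ}

/-- The row space of a matrix. -/
def rowSpace (A : Matrix (Fin m) (Fin n) F) : Submodule F (Fin n → F) :=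
  Submodule.span F (Set.range A)

theorem rowSpace_le_iff (A : Matrix (Fin m) (Fin n) F) (X : Submodule F (Fin n → F)) :
    rowSpace A ≤ X ↔ ∀ i, A i ∈ X := by
  rw [rowSpace, Submodule.span_le]; exact Set.range_subset_iff

/-- Matrices whose row space is contained in `X`. -/
def supportedOn (m : ℕ) (X : Submodule F (Fin n → F)) :
    Submodule F (Matrix (Fin m) (Fin n) F) where
  carrier := {A | rowSpace A ≤ X}
  add_mem' := fun {A B} hA hB => by
    rw [Set.mem_setOf_eq, rowSpace_le_iff] at *
    exact fun i => X.add_mem (hA i) (hB i)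
  zero_mem' := by
    rw [Set.mem_setOf_eq, rowSpace_le_iff]
    exact fun i => X.zero_mem
  smul_mem' := fun c A hA => by
    rw [Set.mem_setOf_eq, rowSpace_le_iff] at *
    exact fun i => X.smul_mem c (hA i)

/-- `C(X)`: the subspace of a Delsarte code `C` of matrices whose row space lies in `X`. -/
def subcode (C : Submodule F (Matrix (Fin m) (Fin n) F)) (X : Submodule F (Fin n → F)) :
    Submodule F (Matrix (Fin m) (Fin n) F) :=
  C ⊓ supportedOn m X

/-- The rank function `ρ_C(X) = dim C − dim C(X^⊥)` of a Delsarte code. -/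
noncomputable def rhoC (C : Submodule F (Matrix (Fin m) (Fin n) F))
    (X : Submodule F (Fin n → F)) : ℤ :=
  (finrank F C : ℤ) - (finrank F (subcode C (perp X)) : ℤ)

/-- The generalized weight `d_r(C) = min{dim X : dim C(X) ≥ r}` of a Delsarte code. -/
noncomputable def codeWeight (C : Submodule F (Matrix (Fin m) (Fin n) F)) (r : ℤ) : ℕ :=
  sInf {d : ℕ | ∃ X : Submodule F (Fin n → F),
    finrank F X = d ∧ r ≤ (finrank F (subcode C X) : ℤ)}

/-- The trace dual of a Delsarte code. -/
def traceDual (C : Submodule F (Matrix (Fin m) (Fin n) F)) :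
    Submodule F (Matrix (Fin m) (Fin n) F) where
  carrier := {N | ∀ M ∈ C, Matrix.trace (M * Nᵀ) = 0}
  add_mem' := fun {N₁ N₂} h1 h2 M hM => by
    rw [Matrix.transpose_add, Matrix.mul_add, Matrix.trace_add, h1 M hM, h2 M hM, add_zero]
  zero_mem' := fun M hM => by simp
  smul_mem' := fun c N hN M hM => by
    rw [Matrix.transpose_smul, Matrix.mul_smul, Matrix.trace_smul, hN M hM, smul_zero]

/-- The transposed code `Cᵀ = {Mᵗ : M ∈ C}` of a code of square matrices. -/
def transposeCode (C : Submodule F (Matrix (Fin n) (Fin n) F)) :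
    Submodule F (Matrix (Fin n) (Fin n) F) where
  carrier := {A | Aᵀ ∈ C}
  add_mem' := fun {A B} hA hB => by
    rw [Set.mem_setOf_eq, Matrix.transpose_add]; exact C.add_mem hA hB
  zero_mem' := by
    rw [Set.mem_setOf_eq, Matrix.transpose_zero]; exact C.zero_mem
  smul_mem' := fun c A hA => by
    rw [Set.mem_setOf_eq, Matrix.transpose_smul]; exact C.smul_mem c hA

/-- The maximum rank of a matrix in a subspace of matrices. -/
noncomputable def maxrank (A : Submodule F (Matrix (Fin m) (Fin n) F)) : ℕ :=
  sSup {r : ℕ | ∃ M ∈ A, M.rank = r}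

/-- An optimal anticode: a subspace `𝒜` of `𝕄` with `dim 𝒜 = m · maxrank 𝒜`. -/
def IsOptimalAnticode (A : Submodule F (Matrix (Fin m) (Fin n) F)) : Prop :=
  finrank F A = m * maxrank A

/-- Ravagnani's generalized weight `a_r(C)`. -/
noncomputable def aWeight (C : Submodule F (Matrix (Fin m) (Fin n) F)) (r : ℤ) : ℕ :=
  (sInf {d : ℕ | ∃ A : Submodule F (Matrix (Fin m) (Fin n) F),
    IsOptimalAnticode A ∧ finrank F A = d ∧ r ≤ (finrank F (A ⊓ C : Submodule F _) : ℤ)}) / m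

end Codes


section AuxProofs

variable {F : Type*} [Field F] [Fintype F] {n m : ℕ}

open Finset

lemma perp_antitone' {X Y : Submodule F (Fin n → F)} (h : X ≤ Y) : perp Y ≤ perp X :=
  fun x hx y hy => hx y (h hy)

lemma eq_zero_of_forall_dot {x : Fin n → F} (h : ∀ y, dotProduct x y = 0) : x = 0 := by
  funext i
  have := h (Pi.single i 1)
  rwa [dotProduct_single, mul_one] at this

/-- The dot product as a linear map into the dual. -/
noncomputable def dotL (F : Type*) [Field F] (n : ℕ) :
    (Fin n → F) →ₗ[F] Module.Dual F (Fin n → F) :=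
  LinearMap.mk₂ F (fun x y => dotProduct x y)
    (fun a b c => add_dotProduct a b c)
    (fun c a b => smul_dotProduct c a b)
    (fun a b c => dotProduct_add a b c)
    (fun c a b => dotProduct_smul c a b)

lemma dotL_apply (x y : Fin n → F) : dotL F n x y = dotProduct x y := rfl

lemma dotL_inj : Function.Injective (dotL F n) := by
  rw [← LinearMap.ker_eq_bot, Submodule.eq_bot_iff]
  intro x hx
  exact eq_zero_of_forall_dot fun y => by
    have := LinearMap.congr_fun ((LinearMap.mem_ker).mp hx) y
    simpa [dotL_apply] using this

lemma dotL_surj : Function.Surjective (dotL F n) := by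
  rw [← LinearMap.range_eq_top]
  apply Submodule.eq_top_of_finrank_eq
  rw [LinearMap.finrank_range_of_inj dotL_inj, Subspace.dual_finrank_eq,
    Module.finrank_fin_fun]

lemma finrank_perp_add (X : Submodule F (Fin n → F)) :
    Module.finrank F (perp X) + Module.finrank F X = n := by
  classical
  set f := (X.subtype.dualMap).comp (dotL F n) with hf
  have hker : LinearMap.ker f = perp X := by
    ext x
    constructor
    · intro hx y hy
      have := LinearMap.congr_fun ((LinearMap.mem_ker).mp hx) ⟨y, hy⟩
      simpa [hf, dotL_apply] using this
    · intro hx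
      rw [LinearMap.mem_ker]
      ext y
      simpa [hf, dotL_apply] using hx y.1 y.2
  have hsurj : Function.Surjective f :=
    (LinearMap.dualMap_surjective_of_injective X.injective_subtype).comp dotL_surj
  have h := LinearMap.finrank_range_add_finrank_ker f
  rw [hker, LinearMap.range_eq_top.mpr hsurj, finrank_top, Subspace.dual_finrank_eq,
    Module.finrank_fin_fun] at h
  omega

lemma perp_perp (X : Submodule F (Fin n → F)) : perp (perp X) = X := by
  have hle : X ≤ perp (perp X) := fun x hx y hy => by
    rw [dotProduct_comm]; exact hy x hx
  refine (Submodule.eq_of_le_of_finrank_le hle ?_).symm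
  have h1 := finrank_perp_add X
  have h2 := finrank_perp_add (perp X)
  omega

lemma perp_top : perp (⊤ : Submodule F (Fin n → F)) = ⊥ := by
  rw [Submodule.eq_bot_iff]
  exact fun x hx => eq_zero_of_forall_dot fun y => hx y trivial

lemma supportedOn_mono {X Y : Submodule F (Fin n → F)} (h : X ≤ Y) :
    supportedOn m X ≤ supportedOn m Y := fun A hA => le_trans hA h

lemma supportedOn_bot : supportedOn m (⊥ : Submodule F (Fin n → F)) = ⊥ := by
  rw [Submodule.eq_bot_iff]
  intro A hA
  have h := (rowSpace_le_iff A ⊥).mp hA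
  funext i
  exact (Submodule.mem_bot F).mp (h i)

/-- `supportedOn m X` is linearly equivalent to `Fin m → X`. -/
noncomputable def supportedOnEquiv (X : Submodule F (Fin n → F)) :
    (supportedOn m X : Submodule F (Matrix (Fin m) (Fin n) F)) ≃ₗ[F] (Fin m → X) where
  toFun A := fun i => ⟨A.1 i, (rowSpace_le_iff A.1 X).mp A.2 i⟩
  map_add' A B := rfl
  map_smul' c A := rfl
  invFun f := ⟨fun i => (f i).1, (rowSpace_le_iff _ X).mpr fun i => (f i).2⟩
  left_inv A := rfl
  right_inv f := rfl

lemma finrank_supportedOn (X : Submodule F (Fin n → F)) :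
    Module.finrank F (supportedOn m X) = m * Module.finrank F X := by
  rw [LinearEquiv.finrank_eq (supportedOnEquiv X), Module.finrank_pi_fintype,
    Finset.sum_const, Finset.card_univ, Fintype.card_fin, smul_eq_mul]

/-- Key inequality: for `C' ≤ C` and `W' ≤ W`,
`dim(C'⊓W) − dim(C'⊓W') ≤ dim(C⊓W) − dim(C⊓W')`. -/
lemma finrank_inf_diff_le {V : Type*} [AddCommGroup V] [Module F V] [FiniteDimensional F V]
    {C' C W' W : Submodule F V} (hC : C' ≤ C) (hW : W' ≤ W) :
    (Module.finrank F (C' ⊓ W : Submodule F V) : ℤ)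
        - (Module.finrank F (C' ⊓ W' : Submodule F V) : ℤ) ≤
      (Module.finrank F (C ⊓ W : Submodule F V) : ℤ)
        - (Module.finrank F (C ⊓ W' : Submodule F V) : ℤ) := by
  have hinf : (C ⊓ W') ⊓ (C' ⊓ W) = C' ⊓ W' := by
    ext x
    simp only [Submodule.mem_inf]
    exact ⟨fun h => ⟨h.2.1, h.1.2⟩, fun h => ⟨⟨hC h.1, h.2⟩, ⟨h.1, hW h.2⟩⟩⟩
  have hsup : (C ⊓ W') ⊔ (C' ⊓ W) ≤ C ⊓ W :=
    sup_le (le_inf inf_le_left (inf_le_right.trans hW))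
      (le_inf (inf_le_left.trans hC) inf_le_right)
  have h1 := Submodule.finrank_sup_add_finrank_inf_eq (C ⊓ W') (C' ⊓ W)
  rw [hinf] at h1
  have h2 := Submodule.finrank_mono hsup
  omega

lemma alt_sum_bounds :
    ∀ (s : ℕ) (a : ℕ → ℤ), (∀ i, 0 ≤ a i) → (∀ i, a (i + 1) ≤ a i) →
      0 ≤ ∑ i ∈ Finset.range s, (-1 : ℤ) ^ i * a i ∧
        ∑ i ∈ Finset.range s, (-1 : ℤ) ^ i * a i ≤ a 0
  | 0, a, h0, _ => by simpa using h0 0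
  | (s + 1), a, h0, hm => by
    obtain ⟨ih1, ih2⟩ := alt_sum_bounds s (fun i => a (i + 1)) (fun i => h0 _) (fun i => hm _)
    rw [Finset.sum_range_succ']
    have hrw : ∀ i, (-1 : ℤ) ^ (i + 1) * a (i + 1) = -((-1 : ℤ) ^ i * a (i + 1)) :=
      fun i => by ring
    simp only [hrw, Finset.sum_neg_distrib, pow_zero, one_mul]
    constructor <;> [linarith [hm 0]; linarith [h0 0]]

lemma alt_fin_sum_nonneg {s : ℕ} (g : Fin s → ℤ) (h0 : ∀ i, 0 ≤ g i)
    (hm : ∀ i j : Fin s, i ≤ j → g j ≤ g i) :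
    0 ≤ ∑ i : Fin s, (-1 : ℤ) ^ (i : ℕ) * g i := by
  classical
  set a : ℕ → ℤ := fun i => if h : i < s then g ⟨i, h⟩ else 0 with ha
  have h0' : ∀ i, 0 ≤ a i := by
    intro i
    by_cases h : i < s
    · rw [show a i = g ⟨i, h⟩ from dif_pos h]; exact h0 _
    · rw [show a i = 0 from dif_neg h]
  have hm' : ∀ i, a (i + 1) ≤ a i := by
    intro i
    by_cases h : i + 1 < s
    · have hi : i < s := Nat.lt_of_succ_lt h
      rw [show a (i + 1) = g ⟨i + 1, h⟩ from dif_pos h, show a i = g ⟨i, hi⟩ from dif_pos hi]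
      exact hm _ _ (by simp [Fin.le_def])
    · rw [show a (i + 1) = 0 from dif_neg h]
      exact h0' i
  have hsum : ∑ i : Fin s, (-1 : ℤ) ^ (i : ℕ) * g i
      = ∑ i ∈ Finset.range s, (-1 : ℤ) ^ i * a i := by
    rw [← Fin.sum_univ_eq_sum_range]
    refine Finset.sum_congr rfl fun i _ => ?_
    congr 1
    rw [show a (i : ℕ) = g ⟨(i : ℕ), i.isLt⟩ from dif_pos i.isLt, Fin.eta]
  rw [hsum]
  exact (alt_sum_bounds s a h0' hm').1

lemma alt_fin_sum_bounds {s : ℕ} (g : Fin s → ℤ) (h0 : ∀ i, 0 ≤ g i)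
    (hm : ∀ i j : Fin s, i ≤ j → g j ≤ g i) (B : ℤ) (hB : 0 ≤ B) (hgB : ∀ i, g i ≤ B) :
    0 ≤ ∑ i : Fin s, (-1 : ℤ) ^ (i : ℕ) * g i ∧
      ∑ i : Fin s, (-1 : ℤ) ^ (i : ℕ) * g i ≤ B := by
  classical
  set a : ℕ → ℤ := fun i => if h : i < s then g ⟨i, h⟩ else 0 with ha
  have h0' : ∀ i, 0 ≤ a i := by
    intro i
    by_cases h : i < s
    · rw [show a i = g ⟨i, h⟩ from dif_pos h]; exact h0 _
    · rw [show a i = 0 from dif_neg h]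
  have hm' : ∀ i, a (i + 1) ≤ a i := by
    intro i
    by_cases h : i + 1 < s
    · have hi : i < s := Nat.lt_of_succ_lt h
      rw [show a (i + 1) = g ⟨i + 1, h⟩ from dif_pos h, show a i = g ⟨i, hi⟩ from dif_pos hi]
      exact hm _ _ (by simp [Fin.le_def])
    · rw [show a (i + 1) = 0 from dif_neg h]
      exact h0' i
  have hsum : ∑ i : Fin s, (-1 : ℤ) ^ (i : ℕ) * g i
      = ∑ i ∈ Finset.range s, (-1 : ℤ) ^ i * a i := by
    rw [← Fin.sum_univ_eq_sum_range]
    refine Finset.sum_congr rfl fun i _ => ?_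
    congr 1
    rw [show a (i : ℕ) = g ⟨(i : ℕ), i.isLt⟩ from dif_pos i.isLt, Fin.eta]
  obtain ⟨hb1, hb2⟩ := alt_sum_bounds s a h0' hm'
  rw [hsum]
  refine ⟨hb1, hb2.trans ?_⟩
  by_cases h : 0 < s
  · rw [show a 0 = g ⟨0, h⟩ from dif_pos h]; exact hgB _
  · rw [show a 0 = 0 from dif_neg h]; exact hB

lemma subcode_mono_right (D : Submodule F (Matrix (Fin m) (Fin n) F))
    {X Y : Submodule F (Fin n → F)} (h : X ≤ Y) : subcode D X ≤ subcode D Y :=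
  inf_le_inf_left _ (supportedOn_mono h)

lemma subcode_mono_left {D D' : Submodule F (Matrix (Fin m) (Fin n) F)} (h : D' ≤ D)
    (X : Submodule F (Fin n → F)) : subcode D' X ≤ subcode D X :=
  inf_le_inf_right _ h

lemma finrank_subcode_le_supportedOn (D : Submodule F (Matrix (Fin m) (Fin n) F))
    (X : Submodule F (Fin n → F)) :
    Module.finrank F (subcode D X) ≤ m * Module.finrank F X := by
  rw [← finrank_supportedOn X]
  exact Submodule.finrank_mono inf_le_right

/-- `dim(D⊓S_Y) − dim(D⊓S_X) ≤ m·(dim Y − dim X)` for `X ≤ Y`. -/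
lemma finrank_subcode_diff_le (D : Submodule F (Matrix (Fin m) (Fin n) F))
    {X Y : Submodule F (Fin n → F)} (h : X ≤ Y) :
    (Module.finrank F (subcode D Y) : ℤ) - (Module.finrank F (subcode D X) : ℤ) ≤
      (m : ℤ) * (Module.finrank F Y : ℤ) - (m : ℤ) * (Module.finrank F X : ℤ) := by
  have key := finrank_inf_diff_le (F := F) (C' := D)
    (C := (⊤ : Submodule F (Matrix (Fin m) (Fin n) F)))
    (W' := supportedOn m X) (W := supportedOn m Y) le_top (supportedOn_mono h)
  rw [top_inf_eq, top_inf_eq, finrank_supportedOn, finrank_supportedOn] at key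
  calc (Module.finrank F (subcode D Y) : ℤ) - (Module.finrank F (subcode D X) : ℤ)
      ≤ (↑(m * Module.finrank F Y) : ℤ) - (↑(m * Module.finrank F X) : ℤ) := key
    _ = (m : ℤ) * (Module.finrank F Y : ℤ) - (m : ℤ) * (Module.finrank F X : ℤ) := by
        push_cast; ring

lemma rhoC_nonneg (D : Submodule F (Matrix (Fin m) (Fin n) F)) (X : Submodule F (Fin n → F)) :
    0 ≤ rhoC D X := by
  rw [rhoC, sub_nonneg]
  exact_mod_cast Submodule.finrank_mono (inf_le_left : subcode D (perp X) ≤ D)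

lemma rhoC_le (D : Submodule F (Matrix (Fin m) (Fin n) F)) (X : Submodule F (Fin n → F)) :
    rhoC D X ≤ (m : ℤ) * (Module.finrank F X : ℤ) := by
  have key := finrank_inf_diff_le (F := F) (C' := D)
    (C := (⊤ : Submodule F (Matrix (Fin m) (Fin n) F)))
    (W' := supportedOn m (perp X)) (W := (⊤ : Submodule F (Matrix (Fin m) (Fin n) F)))
    le_top le_top
  rw [inf_top_eq, inf_top_eq, top_inf_eq, finrank_top, finrank_supportedOn,
    Module.finrank_matrix, Module.finrank_self, mul_one, Fintype.card_fin,
    Fintype.card_fin] at key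
  have hp := finrank_perp_add X
  rw [rhoC]
  have hmul : (↑(m * n) : ℤ) - (↑(m * Module.finrank F (perp X)) : ℤ)
      = (m : ℤ) * (Module.finrank F X : ℤ) := by
    have : (n : ℤ) = (Module.finrank F (perp X) : ℤ) + (Module.finrank F X : ℤ) := by
      exact_mod_cast hp.symm
    push_cast
    rw [this]; ring
  calc (Module.finrank F D : ℤ) - (Module.finrank F (subcode D (perp X)) : ℤ)
      ≤ (↑(m * n) : ℤ) - (↑(m * Module.finrank F (perp X)) : ℤ) := key
    _ = (m : ℤ) * (Module.finrank F X : ℤ) := hmul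

lemma rhoC_code_mono {D' D : Submodule F (Matrix (Fin m) (Fin n) F)} (h : D' ≤ D)
    (X : Submodule F (Fin n → F)) : rhoC D' X ≤ rhoC D X := by
  have key := finrank_inf_diff_le (F := F) (C' := D') (C := D)
    (W' := supportedOn m (perp X)) (W := (⊤ : Submodule F (Matrix (Fin m) (Fin n) F)))
    h le_top
  rw [inf_top_eq, inf_top_eq] at key
  exact key

lemma subcode_bot_right (D : Submodule F (Matrix (Fin m) (Fin n) F)) :
    subcode D (⊥ : Submodule F (Fin n → F)) = ⊥ := by
  rw [subcode, supportedOn_bot, inf_bot_eq]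

end AuxProofs

lemma flag_dual_formula {F : Type*} [Field F] [Fintype F] {n m s : ℕ}
    (C : Fin s → Submodule F (Matrix (Fin m) (Fin n) F)) (X : Submodule F (Fin n → F)) :
    dualRho m (fun X => ∑ i : Fin s, (-1 : ℤ) ^ (i : ℕ) * rhoC (C i) X) X
      = (m : ℤ) * (Module.finrank F X : ℤ)
        - ∑ i : Fin s, (-1 : ℤ) ^ (i : ℕ) * (Module.finrank F (subcode (C i) X) : ℤ) := by
  rw [dualRho]
  have h1 : ∑ i : Fin s, (-1 : ℤ) ^ (i : ℕ) * rhoC (C i) (perp X)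
      = ∑ i : Fin s, ((-1 : ℤ) ^ (i : ℕ) * (Module.finrank F (C i) : ℤ)
        - (-1 : ℤ) ^ (i : ℕ) * (Module.finrank F (subcode (C i) X) : ℤ)) := by
    refine Finset.sum_congr rfl fun i _ => ?_
    simp only [rhoC]
    rw [perp_perp]
    ring
  have h2 : ∑ i : Fin s, (-1 : ℤ) ^ (i : ℕ) * rhoC (C i) (⊤ : Submodule F (Fin n → F))
      = ∑ i : Fin s, (-1 : ℤ) ^ (i : ℕ) * (Module.finrank F (C i) : ℤ) := by
    refine Finset.sum_congr rfl fun i _ => ?_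
    simp only [rhoC]
    rw [perp_top, subcode_bot_right]
    simp
  rw [h1, h2, Finset.sum_sub_distrib]
  ring

/-- the rank function `ρ_F(X) = Σ (−1)^{i+1} ρ_{C_i}(X)` of a flag
`C_s ⊆ ⋯ ⊆ C₁` of Delsarte codes defines a `(q,m)`-demi-polymatroid. -/
theorem flag_is_demi {F : Type*} [Field F] [Fintype F] {n m s : ℕ}
    (C : Fin s → Submodule F (Matrix (Fin m) (Fin n) F))
    (hC : ∀ i j : Fin s, i ≤ j → C j ≤ C i) :
    ∃ D : QMDemiPolymatroid F n m,
      ∀ X : Submodule F (Fin n → F),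
        D.rho X = ∑ i : Fin s, (-1 : ℤ) ^ (i : ℕ) * rhoC (C i) X := by
  classical
  refine ⟨⟨fun X => ∑ i : Fin s, (-1 : ℤ) ^ (i : ℕ) * rhoC (C i) X,
    ?_, ?_, ?_, ?_, ?_, ?_⟩, fun X => rfl⟩
  · -- rho_nonneg
    intro X
    exact (alt_fin_sum_bounds (fun i => rhoC (C i) X) (fun i => rhoC_nonneg _ _)
      (fun i j hij => rhoC_code_mono (hC i j hij) X)
      ((m : ℤ) * (Module.finrank F X : ℤ)) (by positivity) (fun i => rhoC_le _ _)).1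
  · -- rho_le
    intro X
    exact (alt_fin_sum_bounds (fun i => rhoC (C i) X) (fun i => rhoC_nonneg _ _)
      (fun i j hij => rhoC_code_mono (hC i j hij) X)
      ((m : ℤ) * (Module.finrank F X : ℤ)) (by positivity) (fun i => rhoC_le _ _)).2
  · -- rho_mono
    intro X Y hXY
    rw [← sub_nonneg, ← Finset.sum_sub_distrib]
    have heq : ∀ i : Fin s, (-1 : ℤ) ^ (i : ℕ) * rhoC (C i) Y
        - (-1 : ℤ) ^ (i : ℕ) * rhoC (C i) X
        = (-1 : ℤ) ^ (i : ℕ) * (rhoC (C i) Y - rhoC (C i) X) := fun i => by ring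
    rw [Finset.sum_congr rfl fun i _ => heq i]
    have hperp : perp Y ≤ perp X := perp_antitone' hXY
    refine alt_fin_sum_nonneg (fun i => rhoC (C i) Y - rhoC (C i) X) ?_ ?_
    · intro i
      simp only [rhoC]
      have h2 : (Module.finrank F (subcode (C i) (perp Y)) : ℤ)
          ≤ (Module.finrank F (subcode (C i) (perp X)) : ℤ) := by
        exact_mod_cast Submodule.finrank_mono (subcode_mono_right _ hperp)
      linarith
    · intro i j hij
      have key := finrank_inf_diff_le (F := F) (C' := C j) (C := C i)
        (W' := supportedOn m (perp Y)) (W := supportedOn m (perp X))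
        (hC i j hij) (supportedOn_mono hperp)
      simp only [rhoC]
      have : (Module.finrank F (subcode (C j) (perp X)) : ℤ)
            - (Module.finrank F (subcode (C j) (perp Y)) : ℤ)
          ≤ (Module.finrank F (subcode (C i) (perp X)) : ℤ)
            - (Module.finrank F (subcode (C i) (perp Y)) : ℤ) := key
      linarith
  · -- dual_nonneg
    intro X
    rw [flag_dual_formula C X, sub_nonneg]
    exact (alt_fin_sum_bounds (fun i => (Module.finrank F (subcode (C i) X) : ℤ))
      (fun i => by positivity)
      (fun i j hij => by
        exact_mod_cast Submodule.finrank_mono (subcode_mono_left (hC i j hij) X))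
      ((m : ℤ) * (Module.finrank F X : ℤ)) (by positivity)
      (fun i => by
        exact_mod_cast finrank_subcode_le_supportedOn (C i) X)).2
  · -- dual_le
    intro X
    rw [flag_dual_formula C X]
    have := alt_fin_sum_nonneg (fun i => (Module.finrank F (subcode (C i) X) : ℤ))
      (fun i => by positivity)
      (fun i j hij => by
        exact_mod_cast Submodule.finrank_mono (subcode_mono_left (hC i j hij) X))
    linarith
  · -- dual_mono
    intro X Y hXY
    rw [flag_dual_formula C X, flag_dual_formula C Y]
    have hkey : ∑ i : Fin s, (-1 : ℤ) ^ (i : ℕ)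
          * ((Module.finrank F (subcode (C i) Y) : ℤ)
            - (Module.finrank F (subcode (C i) X) : ℤ))
        ≤ (m : ℤ) * (Module.finrank F Y : ℤ) - (m : ℤ) * (Module.finrank F X : ℤ) := by
      refine (alt_fin_sum_bounds _ ?_ ?_ _ ?_ ?_).2
      · intro i
        have := Submodule.finrank_mono (subcode_mono_right (C i) hXY)
        have h2 : (Module.finrank F (subcode (C i) X) : ℤ)
            ≤ (Module.finrank F (subcode (C i) Y) : ℤ) := by exact_mod_cast this
        linarith
      · intro i j hij
        have key : (Module.finrank F (subcode (C j) Y) : ℤ)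
              - (Module.finrank F (subcode (C j) X) : ℤ)
            ≤ (Module.finrank F (subcode (C i) Y) : ℤ)
              - (Module.finrank F (subcode (C i) X) : ℤ) :=
          finrank_inf_diff_le (hC i j hij) (supportedOn_mono hXY)
        linarith
      · have := Submodule.finrank_mono hXY
        have h2 : (Module.finrank F X : ℤ) ≤ (Module.finrank F Y : ℤ) := by exact_mod_cast this
        nlinarith [Int.ofNat_nonneg m]
      · intro i
        exact finrank_subcode_diff_le (C i) hXY
    have hsum : ∑ i : Fin s, (-1 : ℤ) ^ (i : ℕ)
          * ((Module.finrank F (subcode (C i) Y) : ℤ)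
            - (Module.finrank F (subcode (C i) X) : ℤ))
        = ∑ i : Fin s, (-1 : ℤ) ^ (i : ℕ) * (Module.finrank F (subcode (C i) Y) : ℤ)
          - ∑ i : Fin s, (-1 : ℤ) ^ (i : ℕ) * (Module.finrank F (subcode (C i) X) : ℤ) := by
      rw [← Finset.sum_sub_distrib]
      exact Finset.sum_congr rfl fun i _ => by ring
    rw [hsum] at hkey
    linarith
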